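/- Let s ∈ (0,1) and α ∈ (−∞,1). Then there exists a constant K > 0 such that for all integers n ≥ 1, |Σ_{i=1}^{n} (i/n)^{1−α} · C(n,i) s^i (1−s)^{n−i} − s^{1−α}| ≤ K·n^{−1/2}, where C(n,i) denotes the binomial coefficient n choose i. -/

import Mathlib

open scoped BigOperators

/-- Convergence rate of the longevity-credit factor: for `s ∈ (0,1)` and `α < 1`,
the binomial expectation `Σ_{i=1}^n (i/n)^{1−α} C(n,i) s^i (1−s)^{n−i}` converges
to `s^{1−α}` at rate `n^{−1/2}`. -/
theorem binomial_moment_convergence (s α : ℝ) (hs : s ∈ Set.Ioo (0:ℝ) 1) (hα : α < 1) :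
    ∃ K : ℝ, 0 < K ∧ ∀ n : ℕ, 1 ≤ n →
      |(∑ i ∈ Finset.Icc 1 n,
          ((i : ℝ) / (n : ℝ)) ^ (1 - α) * (n.choose i : ℝ) * s ^ i * (1 - s) ^ (n - i))
        - s ^ (1 - α)| ≤ K * (n : ℝ) ^ (-(1/2) : ℝ) := by
  obtain ⟨hs0, hs1⟩ := hs
  have h1α : (0:ℝ) < 1 - α := by linarith
  set L : ℝ := (1 - α) * max ((s/2) ^ (-α)) 1 with hLdef
  have hmax1 : (1:ℝ) ≤ max ((s/2) ^ (-α)) 1 := le_max_right _ _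
  have hL : 0 < L := mul_pos h1α (lt_of_lt_of_le one_pos hmax1)
  have hs2 : 0 < s/2 := by linarith
  -- Lipschitz estimate on [s/2, 1]
  have lip : ∀ t ∈ Set.Icc (s/2) (1:ℝ), |t ^ (1-α) - s ^ (1-α)| ≤ L * |t - s| := by
    intro t ht
    have hderiv : ∀ u ∈ Set.Icc (s/2) (1:ℝ),
        HasDerivWithinAt (fun y : ℝ => y ^ (1-α)) ((1-α) * u ^ (1-α-1))
          (Set.Icc (s/2) 1) u := by
      intro u hu
      have hu0 : u ≠ 0 := ne_of_gt (lt_of_lt_of_le hs2 hu.1)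
      exact (Real.hasDerivAt_rpow_const (Or.inl hu0)).hasDerivWithinAt
    have hbound : ∀ u ∈ Set.Icc (s/2) (1:ℝ), ‖(1-α) * u ^ (1-α-1)‖ ≤ L := by
      intro u hu
      have hu0 : 0 < u := lt_of_lt_of_le hs2 hu.1
      rw [Real.norm_eq_abs, abs_mul, abs_of_pos h1α,
        abs_of_nonneg (Real.rpow_nonneg hu0.le _)]
      have he : 1 - α - 1 = -α := by ring
      have hle : u ^ (1-α-1) ≤ max ((s/2) ^ (-α)) 1 := by
        rw [he]
        rcases le_or_gt 0 α with h | h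
        · exact le_max_of_le_left
            (Real.rpow_le_rpow_of_nonpos hs2 hu.1 (by linarith))
        · exact le_max_of_le_right (Real.rpow_le_one hu0.le hu.2 (by linarith))
      exact mul_le_mul_of_nonneg_left hle h1α.le
    have hsmem : s ∈ Set.Icc (s/2) (1:ℝ) := ⟨by linarith, hs1.le⟩
    have := (convex_Icc (s/2) (1:ℝ)).norm_image_sub_le_of_norm_hasDerivWithin_le
      hderiv hbound hsmem ht
    simpa [Real.norm_eq_abs] using this
  -- pointwise estimate on [0,1]
  have ptwise : ∀ t ∈ Set.Icc (0:ℝ) 1,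
      |t ^ (1-α) - s ^ (1-α)| ≤ L * |t - s| + (8/s^2) * (t - s)^2 := by
    intro t ht
    rcases le_or_gt (s/2) t with h | h
    · have h1 := lip t ⟨h, ht.2⟩
      have h2 : 0 ≤ (8/s^2) * (t - s)^2 := by positivity
      linarith
    · have hft : t ^ (1-α) ≤ 1 := Real.rpow_le_one ht.1 ht.2 h1α.le
      have hft0 : 0 ≤ t ^ (1-α) := Real.rpow_nonneg ht.1 _
      have hfs : s ^ (1-α) ≤ 1 := Real.rpow_le_one hs0.le hs1.le h1α.le
      have hfs0 : 0 ≤ s ^ (1-α) := Real.rpow_nonneg hs0.le _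
      have habs : |t ^ (1-α) - s ^ (1-α)| ≤ 2 := by
        rw [abs_sub_le_iff]; constructor <;> linarith
      have hsq : (8/s^2) * (t - s)^2 ≥ 2 := by
        have h4 : s^2/4 ≤ (t - s)^2 := by nlinarith
        have hkey : (8/s^2) * (s^2/4) ≤ (8/s^2) * (t-s)^2 :=
          mul_le_mul_of_nonneg_left h4 (by positivity)
        have heq : (8/s^2) * (s^2/4) = 2 := by
          field_simp
          ring
        linarith
      have hL0 : 0 ≤ L * |t - s| := by positivity
      linarith
  refine ⟨2*L + 8/s^2, by positivity, ?_⟩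
  intro n hn
  have hn0 : (0:ℝ) < n := by exact_mod_cast Nat.lt_of_lt_of_le Nat.zero_lt_one hn
  have hn1 : (1:ℝ) ≤ n := by exact_mod_cast hn
  set x : unitInterval := ⟨s, ⟨hs0.le, hs1.le⟩⟩ with hx
  set ε : ℝ := (n:ℝ) ^ (-(1/2) : ℝ) with hε
  have hεpos : 0 < ε := Real.rpow_pos_of_pos hn0 _
  have hε1 : ε ≤ 1 := Real.rpow_le_one_of_one_le_of_nonpos hn1 (by norm_num)
  have hεsq : ε * ε = ((n:ℝ))⁻¹ := by
    rw [hε, ← Real.rpow_add hn0]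
    norm_num [Real.rpow_neg_one]
  -- rewrite the sum using Bernstein polynomials
  have hsum : (∑ i ∈ Finset.Icc 1 n,
        ((i:ℝ)/(n:ℝ))^(1-α) * (n.choose i : ℝ) * s^i * (1-s)^(n-i))
      = ∑ k : Fin (n+1), ((k:ℝ)/(n:ℝ))^(1-α) * bernstein n k x := by
    rw [Fin.sum_univ_eq_sum_range (fun k => ((k:ℝ)/(n:ℝ))^(1-α) * bernstein n k x)]
    have hsub : Finset.Icc 1 n ⊆ Finset.range (n+1) := by
      intro i hi
      rw [Finset.mem_Icc] at hi
      rw [Finset.mem_range]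
      omega
    rw [Finset.sum_subset hsub]
    · exact Finset.sum_congr rfl fun i _ => by rw [bernstein_apply]; push_cast; ring
    · intro i hi hni
      have : i = 0 := by
        simp only [Finset.mem_Icc, not_and_or, not_le] at hni
        rcases hni with h | h
        · omega
        · simp only [Finset.mem_range] at hi; omega
      subst this
      simp [Real.zero_rpow h1α.ne']
  have hprob : (∑ k : Fin (n+1), bernstein n k x) = 1 := bernstein.probability n x
  have hvar : (∑ k : Fin (n+1), ((k:ℝ)/(n:ℝ) - s)^2 * bernstein n k x) = s*(1-s)/n := by
    have h := bernstein.variance (n := n) (by omega) x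
    rw [← h]
    refine Finset.sum_congr rfl fun k _ => ?_
    congr 1
    have : ((bernstein.z k : ℝ)) = (k:ℝ)/(n:ℝ) := rfl
    rw [show ((x:ℝ)) = s from rfl, this]
    ring
  have hdiff : (∑ k : Fin (n+1), ((k:ℝ)/(n:ℝ))^(1-α) * bernstein n k x) - s^(1-α)
      = ∑ k : Fin (n+1), (((k:ℝ)/(n:ℝ))^(1-α) - s^(1-α)) * bernstein n k x := by
    simp only [sub_mul, Finset.sum_sub_distrib, ← Finset.mul_sum, hprob, mul_one]
  have hmem : ∀ k : Fin (n+1), (k:ℝ)/(n:ℝ) ∈ Set.Icc (0:ℝ) 1 := by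
    intro k
    constructor
    · positivity
    · rw [div_le_one hn0]
      exact_mod_cast Nat.lt_succ_iff.mp k.isLt
  have habs2 : ∀ a : ℝ, |a| ≤ ε + a^2 / ε := by
    intro a
    rw [← mul_le_mul_iff_of_pos_left hεpos]
    have h2 : ε * (ε + a^2/ε) = ε*ε + a^2 := by field_simp
    rw [h2]
    nlinarith [sq_nonneg (|a| - ε), sq_abs a, abs_nonneg a,
      mul_nonneg hεpos.le (abs_nonneg a)]
  rw [hsum, hdiff]
  calc |∑ k : Fin (n+1), (((k:ℝ)/(n:ℝ))^(1-α) - s^(1-α)) * bernstein n k x|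
      ≤ ∑ k : Fin (n+1), |((k:ℝ)/(n:ℝ))^(1-α) - s^(1-α)| * bernstein n k x := by
        refine (Finset.abs_sum_le_sum_abs _ _).trans (le_of_eq ?_)
        exact Finset.sum_congr rfl fun k _ => by
          rw [abs_mul, abs_of_nonneg bernstein_nonneg]
    _ ≤ ∑ k : Fin (n+1),
          (L * |(k:ℝ)/(n:ℝ) - s| + (8/s^2) * ((k:ℝ)/(n:ℝ) - s)^2) * bernstein n k x := by
        refine Finset.sum_le_sum fun k _ => ?_
        exact mul_le_mul_of_nonneg_right (ptwise _ (hmem k)) bernstein_nonneg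
    _ = L * (∑ k : Fin (n+1), |(k:ℝ)/(n:ℝ) - s| * bernstein n k x)
          + (8/s^2) * (∑ k : Fin (n+1), ((k:ℝ)/(n:ℝ) - s)^2 * bernstein n k x) := by
        rw [Finset.mul_sum, Finset.mul_sum, ← Finset.sum_add_distrib]
        exact Finset.sum_congr rfl fun k _ => by ring
    _ ≤ L * (ε + (s*(1-s)/n)/ε) + (8/s^2) * (s*(1-s)/n) := by
        rw [hvar]
        refine add_le_add (mul_le_mul_of_nonneg_left ?_ hL.le) le_rfl
        calc (∑ k : Fin (n+1), |(k:ℝ)/(n:ℝ) - s| * bernstein n k x)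
            ≤ ∑ k : Fin (n+1), (ε + ((k:ℝ)/(n:ℝ) - s)^2 / ε) * bernstein n k x :=
              Finset.sum_le_sum fun k _ =>
                mul_le_mul_of_nonneg_right (habs2 _) bernstein_nonneg
          _ = ε * (∑ k : Fin (n+1), bernstein n k x)
                + (1/ε) * (∑ k : Fin (n+1), ((k:ℝ)/(n:ℝ) - s)^2 * bernstein n k x) := by
              rw [Finset.mul_sum, Finset.mul_sum, ← Finset.sum_add_distrib]
              exact Finset.sum_congr rfl fun k _ => by ring
          _ = ε + (s*(1-s)/n)/ε := by rw [hprob, hvar]; ring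
    _ ≤ (2*L + 8/s^2) * ε := by
        have hVar : s*(1-s)/n ≤ ε*ε := by
          rw [hεsq, ← one_div]
          gcongr
          nlinarith
        have hεε : ε*ε ≤ ε := by nlinarith
        have hVarε : (s*(1-s)/n)/ε ≤ ε := by
          rw [div_le_iff₀ hεpos]
          exact hVar
        have hVar' : s*(1-s)/n ≤ ε := le_trans hVar hεε
        have t1 : L * (ε + (s*(1-s)/n)/ε) ≤ L * (2*ε) :=
          mul_le_mul_of_nonneg_left (by linarith) hL.le
        have t2 : (8/s^2) * (s*(1-s)/n) ≤ (8/s^2) * ε :=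
          mul_le_mul_of_nonneg_left hVar' (by positivity)
        have hr : (2*L+8/s^2)*ε = L*(2*ε) + (8/s^2)*ε := by ring
        linarith
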